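/- Let 0 < β₀ ≤ β₁ with β₀ ≤ a(x) ≤ β₁ and β₀ ≤ ã(x) ≤ β₁ for all x ∈ Ω, let c₀ > 0, h > 0, M ≥ 0 with μ(ω) ≤ c₀ h² and ‖∇u(x)‖ ≤ M for almost every x ∈ ω. Let u, ũ : ℝ² → ℝ be differentiable functions such that B(u,u) = B̃(ũ,u) and B(u,ũ) = B̃(ũ,ũ). Then |∫_Ω a ‖∇u‖² dx − ∫_Ω ã ‖∇ũ‖² dx| ≤ |a₀ − a₁| · √c₀ · M · (β₁/β₀) · (∫_Ω ‖∇u‖² dx)^{1/2} · h. -/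

import Mathlib

open MeasureTheory
open scoped RealInnerProductSpace

lemma cs_aux {α : Type*} [MeasurableSpace α] (μ : Measure α) (f g : α → ℝ)
    (hf : AEStronglyMeasurable f μ) (hg : AEStronglyMeasurable g μ)
    (hf2 : Integrable (fun x => f x ^ 2) μ) (hg2 : Integrable (fun x => g x ^ 2) μ) :
    ∫ x, |f x| * |g x| ∂μ ≤ Real.sqrt (∫ x, f x ^ 2 ∂μ) * Real.sqrt (∫ x, g x ^ 2 ∂μ) := by
  have hconj : Real.HolderConjugate 2 2 := ⟨by norm_num, by norm_num, by norm_num⟩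
  have hfm : MemLp (fun x => |f x|) (ENNReal.ofReal 2) μ := by
    rw [show ENNReal.ofReal 2 = 2 by norm_num]
    exact ((memLp_two_iff_integrable_sq hf).2 hf2).abs
  have hgm : MemLp (fun x => |g x|) (ENNReal.ofReal 2) μ := by
    rw [show ENNReal.ofReal 2 = 2 by norm_num]
    exact ((memLp_two_iff_integrable_sq hg).2 hg2).abs
  have key := integral_mul_le_Lp_mul_Lq_of_nonneg hconj
    (Filter.Eventually.of_forall fun x => abs_nonneg (f x))
    (Filter.Eventually.of_forall fun x => abs_nonneg (g x)) hfm hgm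
  have e1 : ∀ (φ : α → ℝ), (∫ x, |φ x| ^ (2:ℝ) ∂μ) = ∫ x, φ x ^ 2 ∂μ := by
    intro φ; apply integral_congr_ae; filter_upwards with x
    rw [show ((2:ℝ)) = ((2:ℕ):ℝ) by norm_num, Real.rpow_natCast, sq_abs]
  rw [e1 f, e1 g] at key
  calc ∫ x, |f x| * |g x| ∂μ
      ≤ (∫ x, f x ^ 2 ∂μ) ^ ((1:ℝ)/2) * (∫ x, g x ^ 2 ∂μ) ^ ((1:ℝ)/2) := key
    _ = _ := by rw [← Real.sqrt_eq_rpow, ← Real.sqrt_eq_rpow]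

set_option maxHeartbeats 1000000 in
theorem stmt_6
    (Ω ω : Set (EuclideanSpace ℝ (Fin 2)))
    (hΩmeas : MeasurableSet Ω) (hΩfin : volume Ω < ⊤)
    (hωmeas : MeasurableSet ω) (hωsub : ω ⊆ Ω)
    (a₀ a₁ : ℝ) (a atil : EuclideanSpace ℝ (Fin 2) → ℝ)
    (hameas : Measurable a) (hatilmeas : Measurable atil)
    (ha_eq : ∀ x ∈ Ω \ ω, a x = atil x)
    (ha_diff : ∀ x ∈ ω, atil x - a x = a₀ - a₁)
    (β₀ β₁ : ℝ) (hβ₀ : 0 < β₀) (hβ : β₀ ≤ β₁)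
    (ha_bdd : ∀ x ∈ Ω, β₀ ≤ a x ∧ a x ≤ β₁)
    (hatil_bdd : ∀ x ∈ Ω, β₀ ≤ atil x ∧ atil x ≤ β₁)
    (u util : EuclideanSpace ℝ (Fin 2) → ℝ)
    (hu : Differentiable ℝ u) (hutil : Differentiable ℝ util)
    (c₀ h M : ℝ) (hc₀ : 0 < c₀) (hh : 0 < h) (hM0 : 0 ≤ M)
    (hωvol : (volume ω).toReal ≤ c₀ * h ^ 2)
    (hM : ∀ᵐ x ∂volume.restrict ω, ‖gradient u x‖ ≤ M)
    (hint1 : IntegrableOn (fun x => a x * ‖gradient u x‖ ^ 2) Ω)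
    (hint2 : IntegrableOn (fun x => atil x * ‖gradient util x‖ ^ 2) Ω)
    (hint3 : IntegrableOn (fun x => atil x * ⟪gradient util x, gradient u x⟫) Ω)
    (hint4 : IntegrableOn (fun x => a x * ⟪gradient u x, gradient util x⟫) Ω)
    (hint5 : IntegrableOn (fun x => ‖gradient u x‖ ^ 2) Ω)
    (hint6 : IntegrableOn (fun x => ‖gradient util x‖ ^ 2) Ω)
    (hB1 : (∫ x in Ω, a x * ‖gradient u x‖ ^ 2)
        = ∫ x in Ω, atil x * ⟪gradient util x, gradient u x⟫)
    (hB2 : (∫ x in Ω, a x * ⟪gradient u x, gradient util x⟫)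
        = ∫ x in Ω, atil x * ‖gradient util x‖ ^ 2) :
    |(∫ x in Ω, a x * ‖gradient u x‖ ^ 2) - ∫ x in Ω, atil x * ‖gradient util x‖ ^ 2|
      ≤ |a₀ - a₁| * Real.sqrt c₀ * M * (β₁ / β₀)
          * Real.sqrt (∫ x in Ω, ‖gradient u x‖ ^ 2) * h := by
  -- measurability
  have hgu : Measurable (gradient u) :=
    ((InnerProductSpace.toDual ℝ (EuclideanSpace ℝ (Fin 2))).symm.continuous.measurable).comp
      (measurable_fderiv ℝ u)
  have hgut : Measurable (gradient util) :=
    ((InnerProductSpace.toDual ℝ (EuclideanSpace ℝ (Fin 2))).symm.continuous.measurable).comp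
      (measurable_fderiv ℝ util)
  have hgmeas : Measurable (fun x => ⟪gradient util x, gradient u x⟫) := hgut.inner hgu
  have hnu : Measurable (fun x => ‖gradient u x‖) := hgu.norm
  have hnut : Measurable (fun x => ‖gradient util x‖) := hgut.norm
  -- integrability of products of norms
  have hprod_int : IntegrableOn (fun x => ‖gradient u x‖ * ‖gradient util x‖) Ω := by
    apply Integrable.mono' (hint5.add hint6) ((hnu.mul hnut).aestronglyMeasurable)
    filter_upwards with x
    simp only [Pi.add_apply, Pi.mul_apply]
    rw [Real.norm_eq_abs, abs_of_nonneg (mul_nonneg (norm_nonneg _) (norm_nonneg _))]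
    nlinarith [norm_nonneg (gradient u x), norm_nonneg (gradient util x),
      sq_nonneg (‖gradient u x‖ - ‖gradient util x‖)]
  -- integrability of the inner product
  have hIg : IntegrableOn (fun x => ⟪gradient util x, gradient u x⟫) Ω := by
    apply hprod_int.mono' hgmeas.aestronglyMeasurable
    filter_upwards with x
    rw [Real.norm_eq_abs]
    calc |⟪gradient util x, gradient u x⟫| ≤ ‖gradient util x‖ * ‖gradient u x‖ :=
          abs_real_inner_le_norm _ _
      _ = ‖gradient u x‖ * ‖gradient util x‖ := mul_comm _ _
  have hIgω : IntegrableOn (fun x => ⟪gradient util x, gradient u x⟫) ω := hIg.mono_set hωsub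
  have hint4' : IntegrableOn (fun x => a x * ⟪gradient util x, gradient u x⟫) Ω := by
    have e : (fun x => a x * ⟪gradient util x, gradient u x⟫)
        = fun x => a x * ⟪gradient u x, gradient util x⟫ := by
      funext x; rw [real_inner_comm]
    rw [e]; exact hint4
  have hωfin : volume ω < ⊤ := (measure_mono hωsub).trans_lt hΩfin
  -- key identity
  have hsplit : (Ω \ ω) ∪ ω = Ω := Set.diff_union_of_subset hωsub
  have hdisj : Disjoint (Ω \ ω) ω := Set.disjoint_sdiff_left
  have hf_int : IntegrableOn (fun x => (atil x - a x) * ⟪gradient util x, gradient u x⟫) Ω := by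
    have e : (fun x => (atil x - a x) * ⟪gradient util x, gradient u x⟫)
        = fun x => atil x * ⟪gradient util x, gradient u x⟫
            - a x * ⟪gradient util x, gradient u x⟫ := by funext x; ring
    rw [e]; exact hint3.sub hint4'
  have keyA : (∫ x in Ω, a x * ‖gradient u x‖ ^ 2)
      - (∫ x in Ω, atil x * ‖gradient util x‖ ^ 2)
      = (a₀ - a₁) * ∫ x in ω, ⟪gradient util x, gradient u x⟫ := by
    rw [hB1, ← hB2]
    have e : (∫ x in Ω, atil x * ⟪gradient util x, gradient u x⟫)
        - ∫ x in Ω, a x * ⟪gradient u x, gradient util x⟫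
        = ∫ x in Ω, (atil x - a x) * ⟪gradient util x, gradient u x⟫ := by
      rw [← integral_sub hint3 hint4]
      apply integral_congr_ae; filter_upwards with x
      rw [real_inner_comm (gradient u x)]; ring
    rw [e, ← hsplit, setIntegral_union hdisj hωmeas
      (hf_int.mono_set Set.diff_subset) (hf_int.mono_set hωsub)]
    have hz : (∫ x in Ω \ ω, (atil x - a x) * ⟪gradient util x, gradient u x⟫) = 0 := by
      rw [setIntegral_congr_fun (hΩmeas.diff hωmeas)
        (fun x hx => by simp [(ha_eq x hx).symm] : Set.EqOn _ (fun _ => (0:ℝ)) (Ω \ ω))]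
      simp
    rw [hz, zero_add,
      setIntegral_congr_fun hωmeas
        (fun x hx => by rw [ha_diff x hx] : Set.EqOn _
          (fun x => (a₀ - a₁) * ⟪gradient util x, gradient u x⟫) ω),
      integral_const_mul]
  -- integrability of ‖∇util‖ on ω
  have hone : IntegrableOn (fun _ => (1:ℝ)) ω := integrableOn_const hωfin.ne
  have hsum : IntegrableOn (fun x => 1 + ‖gradient util x‖ ^ 2) ω :=
    hone.add (hint6.mono_set hωsub)
  have hnut_int : IntegrableOn (fun x => ‖gradient util x‖) ω := by
    refine hsum.mono' hnut.aestronglyMeasurable ?_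
    filter_upwards with x
    rw [Real.norm_eq_abs, abs_of_nonneg (norm_nonneg _)]
    nlinarith [norm_nonneg (gradient util x), sq_nonneg (‖gradient util x‖ - 1)]
  -- chain of bounds on ω
  have habs : |∫ x in ω, ⟪gradient util x, gradient u x⟫|
      ≤ ∫ x in ω, |⟪gradient util x, gradient u x⟫| := by
    simpa [Real.norm_eq_abs] using
      norm_integral_le_integral_norm (μ := volume.restrict ω)
        (fun x => ⟪gradient util x, gradient u x⟫)
  have hb2 : (∫ x in ω, |⟪gradient util x, gradient u x⟫|)
      ≤ ∫ x in ω, M * ‖gradient util x‖ := by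
    apply integral_mono_ae hIgω.abs (hnut_int.const_mul M)
    filter_upwards [hM] with x hx
    calc |⟪gradient util x, gradient u x⟫| ≤ ‖gradient util x‖ * ‖gradient u x‖ :=
          abs_real_inner_le_norm _ _
      _ ≤ ‖gradient util x‖ * M := by gcongr
      _ = M * ‖gradient util x‖ := mul_comm _ _
  have hb3 : (∫ x in ω, M * ‖gradient util x‖)
      ≤ M * (Real.sqrt ((volume ω).toReal)
          * Real.sqrt (∫ x in ω, ‖gradient util x‖ ^ 2)) := by
    rw [integral_const_mul]
    refine mul_le_mul_of_nonneg_left ?_ hM0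
    have key := cs_aux (volume.restrict ω) (fun _ => 1) (fun x => ‖gradient util x‖)
      aestronglyMeasurable_const hnut.aestronglyMeasurable
      (by simp only [one_pow]; exact hone)
      (hint6.mono_set hωsub)
    simp only [abs_one, one_mul, abs_norm, one_pow] at key
    rwa [setIntegral_const, smul_eq_mul, mul_one] at key
  have hsqμ : Real.sqrt ((volume ω).toReal) ≤ Real.sqrt c₀ * h := by
    have := Real.sqrt_le_sqrt hωvol
    rwa [Real.sqrt_mul hc₀.le, Real.sqrt_sq hh.le] at this
  have hmono : (∫ x in ω, ‖gradient util x‖ ^ 2) ≤ ∫ x in Ω, ‖gradient util x‖ ^ 2 :=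
    setIntegral_mono_set hint6 (Filter.Eventually.of_forall fun x => sq_nonneg _)
      (HasSubset.Subset.eventuallyLE hωsub)
  -- Step F : sqrt for util bounded by sqrt for u
  set S := Real.sqrt (∫ x in Ω, ‖gradient u x‖ ^ 2) with hS
  set T := Real.sqrt (∫ x in Ω, ‖gradient util x‖ ^ 2) with hT
  have hInonneg : 0 ≤ ∫ x in Ω, ‖gradient util x‖ ^ 2 :=
    integral_nonneg fun x => sq_nonneg _
  have hT2 : T ^ 2 = ∫ x in Ω, ‖gradient util x‖ ^ 2 := Real.sq_sqrt hInonneg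
  have e1 : β₀ * (∫ x in Ω, ‖gradient util x‖ ^ 2)
      ≤ ∫ x in Ω, atil x * ‖gradient util x‖ ^ 2 := by
    rw [← integral_const_mul]
    apply setIntegral_mono_on (hint6.const_mul β₀) hint2 hΩmeas
    intro x hx
    exact mul_le_mul_of_nonneg_right (hatil_bdd x hx).1 (sq_nonneg _)
  have e3 : (∫ x in Ω, a x * ⟪gradient u x, gradient util x⟫)
      ≤ β₁ * ∫ x in Ω, ‖gradient u x‖ * ‖gradient util x‖ := by
    rw [← integral_const_mul]
    apply setIntegral_mono_on hint4 (hprod_int.const_mul β₁) hΩmeas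
    intro x hx
    have h1 := abs_real_inner_le_norm (gradient u x) (gradient util x)
    obtain ⟨h1a, h1b⟩ := abs_le.mp h1
    obtain ⟨h2a, h2b⟩ := ha_bdd x hx
    nlinarith [mul_nonneg (le_trans hβ₀.le h2a)
        (sub_nonneg.mpr h1b),
      mul_nonneg (sub_nonneg.mpr h2b)
        (mul_nonneg (norm_nonneg (gradient u x)) (norm_nonneg (gradient util x)))]
  have e4 : (∫ x in Ω, ‖gradient u x‖ * ‖gradient util x‖) ≤ S * T := by
    have key := cs_aux (volume.restrict Ω) (fun x => ‖gradient u x‖)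
      (fun x => ‖gradient util x‖) hnu.aestronglyMeasurable hnut.aestronglyMeasurable hint5 hint6
    simp only [abs_norm] at key
    rw [hS, hT]; exact key
  have hF : T ≤ β₁ / β₀ * S := by
    have hkey : β₀ * T ^ 2 ≤ β₁ * (S * T) := by
      rw [hT2]
      calc β₀ * (∫ x in Ω, ‖gradient util x‖ ^ 2)
          ≤ ∫ x in Ω, atil x * ‖gradient util x‖ ^ 2 := e1
        _ = ∫ x in Ω, a x * ⟪gradient u x, gradient util x⟫ := hB2.symm
        _ ≤ β₁ * ∫ x in Ω, ‖gradient u x‖ * ‖gradient util x‖ := e3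
        _ ≤ β₁ * (S * T) := mul_le_mul_of_nonneg_left e4 (le_trans hβ₀.le hβ)
    have hTnn : 0 ≤ T := Real.sqrt_nonneg _
    have hSnn : 0 ≤ S := Real.sqrt_nonneg _
    rcases hTnn.lt_or_eq with hpos | hzero
    · rw [div_mul_eq_mul_div, le_div_iff₀ hβ₀]
      nlinarith [hkey, hpos]
    · rw [← hzero]
      exact mul_nonneg (div_nonneg (hβ₀.le.trans hβ) hβ₀.le) hSnn
  -- final assembly
  have hTω : Real.sqrt (∫ x in ω, ‖gradient util x‖ ^ 2) ≤ β₁ / β₀ * S := by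
    have := Real.sqrt_le_sqrt hmono
    rw [← hT] at this
    exact this.trans hF
  have hfin : |∫ x in ω, ⟪gradient util x, gradient u x⟫|
      ≤ M * ((Real.sqrt c₀ * h) * (β₁ / β₀ * S)) := by
    refine habs.trans (hb2.trans (hb3.trans ?_))
    refine mul_le_mul_of_nonneg_left ?_ hM0
    exact mul_le_mul hsqμ hTω (Real.sqrt_nonneg _) (by positivity)
  calc |(∫ x in Ω, a x * ‖gradient u x‖ ^ 2) - ∫ x in Ω, atil x * ‖gradient util x‖ ^ 2|
      = |a₀ - a₁| * |∫ x in ω, ⟪gradient util x, gradient u x⟫| := by rw [keyA, abs_mul]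
    _ ≤ |a₀ - a₁| * (M * ((Real.sqrt c₀ * h) * (β₁ / β₀ * S))) :=
        mul_le_mul_of_nonneg_left hfin (abs_nonneg _)
    _ = |a₀ - a₁| * Real.sqrt c₀ * M * (β₁ / β₀) * S * h := by ring
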